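/- arXiv:1601.03592 — 2 statements merged into one kernel-verified Lean document; each statement's English description precedes it below -/
import Mathlib

section
/- Suppose $u,h:[\tau,\infty)\to[0,\infty)$ with $u$ piecewise continuous, $h$ continuous, and $u(t)\le h(t) + \int_\tau^t a\, u(s)\,ds + \sum_{\tau<\theta_k<t} b\, u(\theta_k)$ for all $t\ge\tau$, where $a,b\ge 0$ and $\{\theta_k\}$ is strictly increasing with gaps $\ge\theta>0$. Then $u(t)\le h(t) + \int_\tau^t a(1+b)^{i((s,t))}e^{a(t-s)}h(s)\,ds + \sum_{\tau<\theta_k<t} b(1+b)^{i((\theta_k,t))}e^{a(t-\theta_k)}h(\theta_k)$, where $i((s,t))$ counts terms $\theta_k\in(s,t)$. -/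
open MeasureTheory Set
open scoped Classical

namespace IG
noncomputable section
variable {a b θ0 : ℝ} {θs : ℤ → ℝ}

def cnt (θs : ℤ → ℝ) (s t : ℝ) : ℕ := {j : ℤ | s < θs j ∧ θs j < t}.ncard

def K (a b : ℝ) (θs : ℤ → ℝ) (s t : ℝ) : ℝ :=
  (1 + b) ^ (cnt θs s t) * Real.exp (a * (t - s))

def R (a b : ℝ) (θs : ℤ → ℝ) (τ : ℝ) (h : ℝ → ℝ) (t : ℝ) : ℝ :=
  (∫ s in Ioc τ t, a * K a b θs s t * h s) +
  ∑ᶠ k ∈ {k : ℤ | τ < θs k ∧ θs k < t}, b * K a b θs (θs k) t * h (θs k)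

def W (a b : ℝ) (θs : ℤ → ℝ) (h : ℝ → ℝ) : ℝ × ℝ → ℝ :=
  fun p => if p.2 ≤ p.1 then a * K a b θs p.2 p.1 * h p.2 else 0

def cntF (F : Finset ℤ) (θs : ℤ → ℝ) (r s : ℝ) : ℕ :=
  (F.filter (fun k => r < θs k ∧ θs k < s)).card

def Bf (a b : ℝ) (θs : ℤ → ℝ) (h : ℝ → ℝ) (F : Finset ℤ) (s : ℝ) : ℝ :=
  ∑ k ∈ F, if θs k < s then b * K a b θs (θs k) s * h (θs k) else 0

theorem gap' (hθ0 : 0 < θ0) (hgap : ∀ k : ℤ, θ0 ≤ θs (k + 1) - θs k) :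
    ∀ j k : ℤ, j ≤ k → θs j + θ0 * (k - j) ≤ θs k := by
  have key : ∀ (j : ℤ) (n : ℕ), θs j + θ0 * n ≤ θs (j + n) := by
    intro j n
    induction n with
    | zero => simp
    | succ m ih =>
      have h1 := hgap (j + m)
      have : (j : ℤ) + (m + 1 : ℕ) = (j + m) + 1 := by push_cast; ring
      rw [this]
      push_cast
      push_cast at ih
      linarith
  intro j k hjk
  have hn : k = j + ((k - j).toNat : ℤ) := by omega
  have := key j (k - j).toNat
  rw [← hn] at this
  have hcast : ((k - j).toNat : ℝ) = (k : ℝ) - j := by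
    have : (((k - j).toNat : ℤ) : ℝ) = ((k - j : ℤ) : ℝ) := by norm_cast; omega
    push_cast at this ⊢
    linarith
  rw [hcast] at this
  exact this

theorem finite_imp (hθ0 : 0 < θ0) (hmono : StrictMono θs)
    (hgap : ∀ k : ℤ, θ0 ≤ θs (k + 1) - θs k) (α β : ℝ) :
    {k : ℤ | α < θs k ∧ θs k < β}.Finite := by
  obtain ⟨N, hN⟩ := exists_nat_gt (max ((β - θs 0) / θ0) ((θs 0 - α) / θ0))
  apply Set.Finite.subset (Set.finite_Icc (-(N:ℤ)) N)
  rintro k ⟨hk1, hk2⟩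
  have hmaxN : (β - θs 0) / θ0 < N ∧ (θs 0 - α) / θ0 < N := by
    constructor
    · exact lt_of_le_of_lt (le_max_left _ _) hN
    · exact lt_of_le_of_lt (le_max_right _ _) hN
  constructor
  · by_contra hc
    push_neg at hc
    have hkneg : k ≤ 0 := by omega
    have h1 := gap' hθ0 hgap k 0 hkneg
    have h2 : θ0 * (0 - (k:ℝ)) < θs 0 - α := by push_cast at h1 ⊢; nlinarith
    have h3 : (0 - (k:ℝ)) < N := by
      have := hmaxN.2
      rw [div_lt_iff₀ hθ0] at this  -- (θs 0 - α) < N * θ0 ... wrong direction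
      nlinarith
    have h5 : (-(N:ℤ) : ℝ) < k := by push_cast; linarith
    have h6 : (-(N:ℤ)) < k := by exact_mod_cast h5
    omega
  · by_contra hc
    push_neg at hc
    have hkpos : (0:ℤ) ≤ k := by omega
    have h1 := gap' hθ0 hgap 0 k hkpos
    have h2 : θ0 * ((k:ℝ) - 0) < β - θs 0 := by push_cast at h1 ⊢; nlinarith
    have h3 : ((k:ℝ) - 0) < N := by
      have := hmaxN.1
      rw [div_lt_iff₀ hθ0] at this
      nlinarith
    have h5 : (k:ℝ) < (N:ℤ) := by push_cast; linarith
    have h6 : k < (N:ℤ) := by exact_mod_cast h5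
    omega

/-- integrability of bounded measurable functions on bounded sets -/
theorem bdd_integrableOn {f : ℝ → ℝ} {s : Set ℝ} (hs : MeasurableSet s)
    (hb : Bornology.IsBounded s) (hf : Measurable f)
    {M : ℝ} (hM : ∀ x ∈ s, |f x| ≤ M) : IntegrableOn f s := by
  apply Measure.integrableOn_of_bounded (M := M)
  · exact ((hb.measure_lt_top)).ne
  · exact hf.aestronglyMeasurable
  · exact (ae_restrict_iff' hs).2 (ae_of_all _ (fun x hx => by simpa using hM x hx))

section cntlem
variable (hθ0 : 0 < θ0) (hmono : StrictMono θs) (hgap : ∀ k : ℤ, θ0 ≤ θs (k + 1) - θs k)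
include hθ0 hmono hgap

theorem cnt_mono (s : ℝ) : Monotone (cnt θs s) := by
  intro t1 t2 h
  exact Set.ncard_le_ncard (fun k hk => ⟨hk.1, lt_of_lt_of_le hk.2 h⟩)
    (finite_imp hθ0 hmono hgap s t2)

theorem cnt_anti (t : ℝ) : Antitone (fun s => cnt θs s t) := by
  intro s1 s2 h
  exact Set.ncard_le_ncard (fun k hk => ⟨lt_of_le_of_lt h hk.1, hk.2⟩)
    (finite_imp hθ0 hmono hgap s1 t)

theorem K_meas_right (s : ℝ) : Measurable (fun t => K a b θs s t) := by
  apply Measurable.mul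
  · exact measurable_from_nat.comp (cnt_mono hθ0 hmono hgap s).measurable
  · exact (Real.measurable_exp.comp (measurable_const.mul (measurable_id.sub measurable_const)))

theorem K_meas_left (t : ℝ) : Measurable (fun s => K a b θs s t) := by
  apply Measurable.mul
  · exact measurable_from_nat.comp (cnt_anti hθ0 hmono hgap t).measurable
  · exact (Real.measurable_exp.comp (measurable_const.mul (measurable_const.sub measurable_id)))

omit hθ0 hmono hgap in
theorem K_nonneg (hb : 0 ≤ b) (s t : ℝ) : 0 ≤ K a b θs s t :=
  mul_nonneg (pow_nonneg (by linarith) _) (Real.exp_nonneg _)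

theorem K_le (ha : 0 ≤ a) (hb : 0 ≤ b) {σ t : ℝ} (s : ℝ) (h1 : σ ≤ s) (h2 : s ≤ t) :
    K a b θs s t ≤ K a b θs σ t := by
  apply mul_le_mul
  · exact pow_le_pow_right₀ (by linarith) (cnt_anti hθ0 hmono hgap t h1)
  · exact Real.exp_le_exp.2 (by nlinarith)
  · positivity
  · positivity

/-- boundedness and integrability of s ↦ K s t on Ioc σ t -/
theorem K_intOn_left (ha : 0 ≤ a) (hb : 0 ≤ b) (σ t : ℝ) :
    IntegrableOn (fun s => K a b θs s t) (Set.Ioc σ t) := by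
  apply bdd_integrableOn measurableSet_Ioc (Metric.isBounded_Ioc _ _)
    (K_meas_left hθ0 hmono hgap t) (M := K a b θs σ t)
  intro x hx
  rw [abs_of_nonneg (K_nonneg hb _ _)]
  exact K_le hθ0 hmono hgap ha hb x hx.1.le hx.2

theorem K_intOn_right (ha : 0 ≤ a) (hb : 0 ≤ b) (σ t τ' : ℝ) :
    IntegrableOn (fun s => K a b θs σ s) (Set.Ioc τ' t) := by
  apply bdd_integrableOn measurableSet_Ioc (Metric.isBounded_Ioc _ _)
    (K_meas_right hθ0 hmono hgap σ) (M := (1+b) ^ (cnt θs σ t) * Real.exp (|a| * |t - σ| + |a| * |σ - τ'|))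
  intro x hx
  rw [abs_of_nonneg (K_nonneg hb _ _)]
  apply mul_le_mul
  · exact pow_le_pow_right₀ (by linarith) (cnt_mono hθ0 hmono hgap σ hx.2)
  · apply Real.exp_le_exp.2
    have h1 : a * (x - σ) ≤ |a| * |x - σ| := le_trans (le_abs_self _) (by rw [abs_mul])
    have h2 : |x - σ| ≤ |t - σ| + |σ - τ'| := by
      rcases abs_cases (x - σ) with ⟨h, _⟩ | ⟨h, _⟩ <;> rcases abs_cases (t - σ) with ⟨h3, _⟩ | ⟨h3, _⟩ <;>
        rcases abs_cases (σ - τ') with ⟨h4, _⟩ | ⟨h4, _⟩ <;> cases' hx with hx1 hx2 <;> nlinarith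
    nlinarith [abs_nonneg a, abs_nonneg (x - σ)]
  · positivity
  · positivity

end cntlem

/-- basic integral-form Gronwall inequality, homogeneous case -/
theorem base_gronwall {a σ T : ℝ} (ha : 0 ≤ a) (φ : ℝ → ℝ)
    (hint : IntegrableOn φ (Ioc σ T))
    (hle : ∀ t ∈ Ioc σ T, φ t ≤ ∫ s in Ioc σ t, a * φ s) :
    ∀ t ∈ Ioc σ T, φ t ≤ 0 := by
  set C := ∫ s in Ioc σ T, |φ s| with hC
  have hC0 : 0 ≤ C := integral_nonneg fun s => abs_nonneg _
  have habs : IntegrableOn (fun s => |φ s|) (Ioc σ T) := hint.abs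
  have key : ∀ n : ℕ, ∀ t ∈ Ioc σ T, φ t ≤ a ^ (n+1) * (t - σ) ^ n / n.factorial * C := by
    intro n
    induction n with
    | zero =>
      intro t ht
      have h1 : φ t ≤ ∫ s in Ioc σ t, a * φ s := hle t ht
      have hsub : Ioc σ t ⊆ Ioc σ T := Ioc_subset_Ioc le_rfl ht.2
      have h2 : ∫ s in Ioc σ t, a * φ s ≤ ∫ s in Ioc σ t, a * |φ s| := by
        apply setIntegral_mono_on ((hint.mono_set hsub).const_mul a)
          ((habs.mono_set hsub).const_mul a) measurableSet_Ioc
        intro x _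
        exact mul_le_mul_of_nonneg_left (le_abs_self _) ha
      have h3 : ∫ s in Ioc σ t, a * |φ s| ≤ ∫ s in Ioc σ T, a * |φ s| := by
        apply setIntegral_mono_set (habs.const_mul a)
        · exact ae_of_all _ (fun x => mul_nonneg ha (abs_nonneg _))
        · exact HasSubset.Subset.eventuallyLE hsub
      have h4 : ∫ s in Ioc σ T, a * |φ s| = a * C := by
        rw [hC, integral_const_mul]
      have heq : a ^ (0+1) * (t - σ) ^ 0 / Nat.factorial 0 * C = a * C := by
        simp
      rw [heq]
      linarith
    | succ n ih =>
      intro t ht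
      have hsub : Ioc σ t ⊆ Ioc σ T := Ioc_subset_Ioc le_rfl ht.2
      have hpoly : IntegrableOn (fun s => a * (a ^ (n+1) * (s - σ) ^ n / n.factorial * C)) (Ioc σ t) := by
        apply Continuous.integrableOn_Ioc
        continuity
      have h1 : φ t ≤ ∫ s in Ioc σ t, a * φ s := hle t ht
      have h2 : ∫ s in Ioc σ t, a * φ s ≤ ∫ s in Ioc σ t, a * (a ^ (n+1) * (s - σ) ^ n / n.factorial * C) := by
        apply setIntegral_mono_on ((hint.mono_set hsub).const_mul a) hpoly measurableSet_Ioc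
        intro x hx
        exact mul_le_mul_of_nonneg_left (ih x ⟨hx.1, le_trans hx.2 ht.2⟩) ha
      have h3 : ∫ s in Ioc σ t, a * (a ^ (n+1) * (s - σ) ^ n / n.factorial * C)
          = a ^ (n+2) * C / n.factorial * ∫ s in Ioc σ t, (s - σ) ^ n := by
        rw [← integral_const_mul]
        apply setIntegral_congr_fun measurableSet_Ioc
        intro x _
        ring
      have h4 : ∫ s in Ioc σ t, (s - σ) ^ n = (t - σ) ^ (n+1) / (n+1) := by
        rw [← intervalIntegral.integral_of_le ht.1.le]
        rw [intervalIntegral.integral_comp_sub_right (fun x => x ^ n) σ]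
        rw [integral_pow]
        simp
      rw [h3, h4] at h2
      have : a ^ (n+2) * C / n.factorial * ((t - σ) ^ (n+1) / (n+1))
          = a ^ (n+1+1) * (t - σ) ^ (n+1) / (n+1).factorial * C := by
        rw [Nat.factorial_succ]
        push_cast
        have : (n.factorial : ℝ) ≠ 0 := by positivity
        field_simp
      linarith [h2.trans_eq this]
  intro t ht
  have hlim : Filter.Tendsto (fun n : ℕ => a ^ (n+1) * (t - σ) ^ n / n.factorial * C)
      Filter.atTop (nhds 0) := by
    have h1 : ∀ n : ℕ, a ^ (n+1) * (t - σ) ^ n / n.factorial * C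
        = (a * C) * ((a * (t - σ)) ^ n / n.factorial) := by
      intro n
      rw [pow_succ, mul_pow]
      ring
    simp only [h1]
    have := FloorSemiring.tendsto_pow_div_factorial_atTop (K := ℝ) (a * (t - σ))
    simpa using this.const_mul (a * C)
  exact ge_of_tendsto' hlim (fun n => key n t ht)
section comp
variable (hθ0 : 0 < θ0) (hmono : StrictMono θs) (hgap : ∀ k : ℤ, θ0 ≤ θs (k + 1) - θs k)
include hθ0 hmono hgap

/-- comparison lemma for the impulsive integral inequality -/
theorem comparison (ha : 0 ≤ a) (hb : 0 ≤ b) (T : ℝ) (φ : ℝ → ℝ) :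
    ∀ (n : ℕ) (σ : ℝ), {k : ℤ | σ < θs k ∧ θs k < T}.ncard = n →
    IntegrableOn φ (Ioc σ T) →
    (∀ t ∈ Ioc σ T, φ t ≤ (∫ s in Ioc σ t, a * φ s) +
       ∑ᶠ k ∈ {k : ℤ | σ < θs k ∧ θs k < t}, b * φ (θs k)) →
    ∀ t ∈ Ioc σ T, φ t ≤ 0 := by
  intro n
  induction n with
  | zero =>
    intro σ hn hint hle
    have hfin := finite_imp hθ0 hmono hgap σ T
    have hempty : {k : ℤ | σ < θs k ∧ θs k < T} = ∅ := by
      rwa [← Set.ncard_eq_zero hfin]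
    apply base_gronwall ha φ hint
    intro t ht
    have h1 := hle t ht
    have h2 : {k : ℤ | σ < θs k ∧ θs k < t} = ∅ := by
      apply Set.eq_empty_of_subset_empty
      rw [← hempty]
      exact fun k hk => ⟨hk.1, lt_of_lt_of_le hk.2 ht.2⟩
    rwa [h2, finsum_mem_empty, add_zero] at h1
  | succ n ih =>
    intro σ hn hint hle
    have hfin := finite_imp hθ0 hmono hgap σ T
    have hne : (hfin.toFinset).Nonempty := by
      rw [← Finset.card_pos, ← Set.ncard_eq_toFinset_card _ hfin, hn]; omega
    set k0 := (hfin.toFinset).min' hne with hk0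
    have hk0mem : k0 ∈ hfin.toFinset := Finset.min'_mem _ _
    have hk0S : σ < θs k0 ∧ θs k0 < T := by
      simpa using (hfin.mem_toFinset.1 hk0mem)
    set θ' := θs k0 with hθ'
    -- θ' is the minimum impulse value
    have hminval : ∀ k : ℤ, σ < θs k → θs k < T → θ' ≤ θs k := by
      intro k h1 h2
      have : k ∈ hfin.toFinset := hfin.mem_toFinset.2 ⟨h1, h2⟩
      exact hmono.monotone (Finset.min'_le _ _ this)
    -- no impulses in (σ, θ']
    have hno : ∀ t ∈ Ioc σ θ', {k : ℤ | σ < θs k ∧ θs k < t} = ∅ := by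
      intro t ht
      apply Set.eq_empty_of_subset_empty
      rintro k ⟨h1, h2⟩
      have h3 : θs k < T := lt_of_lt_of_le h2 (le_trans ht.2 hk0S.2.le)
      have := hminval k h1 h3
      exact absurd (lt_of_lt_of_le h2 ht.2) (not_lt.mpr this)
    -- φ ≤ 0 on Ioc σ θ'
    have hφ1 : ∀ t ∈ Ioc σ θ', φ t ≤ 0 := by
      apply base_gronwall ha φ (hint.mono_set (Ioc_subset_Ioc le_rfl hk0S.2.le))
      intro t ht
      have h1 := hle t ⟨ht.1, le_trans ht.2 hk0S.2.le⟩
      rwa [hno t ht, finsum_mem_empty, add_zero] at h1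
    -- new inequality on Ioc θ' T
    have hint2 : IntegrableOn φ (Ioc θ' T) := hint.mono_set (Ioc_subset_Ioc hk0S.1.le le_rfl)
    have hle2 : ∀ t ∈ Ioc θ' T, φ t ≤ (∫ s in Ioc θ' t, a * φ s) +
        ∑ᶠ k ∈ {k : ℤ | θ' < θs k ∧ θs k < t}, b * φ (θs k) := by
      intro t ht
      have htσ : t ∈ Ioc σ T := ⟨lt_trans hk0S.1 ht.1, ht.2⟩
      have h1 := hle t htσ
      -- split the integral
      have hsplit : Ioc σ t = Ioc σ θ' ∪ Ioc θ' t := (Ioc_union_Ioc_eq_Ioc hk0S.1.le ht.1.le).symm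
      have hdisj : Disjoint (Ioc σ θ') (Ioc θ' t) := by
        apply Set.disjoint_left.2
        rintro x ⟨_, hx2⟩ ⟨hx3, _⟩
        exact absurd hx3 (not_lt.mpr hx2)
      have hint3 : IntegrableOn (fun s => a * φ s) (Ioc σ θ') :=
        (hint.mono_set (Ioc_subset_Ioc le_rfl hk0S.2.le)).const_mul a
      have hint4 : IntegrableOn (fun s => a * φ s) (Ioc θ' t) :=
        (hint.mono_set (Ioc_subset_Ioc hk0S.1.le ht.2)).const_mul a
      have hI : ∫ s in Ioc σ t, a * φ s
          = (∫ s in Ioc σ θ', a * φ s) + ∫ s in Ioc θ' t, a * φ s := by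
        rw [hsplit]
        exact setIntegral_union hdisj measurableSet_Ioc hint3 hint4
      have hI1 : (∫ s in Ioc σ θ', a * φ s) ≤ 0 := by
        apply setIntegral_nonpos measurableSet_Ioc
        intro x hx
        exact mul_nonpos_of_nonneg_of_nonpos ha (hφ1 x hx)
      -- split the sum
      have hsetsplit : {k : ℤ | σ < θs k ∧ θs k < t} = insert k0 {k : ℤ | θ' < θs k ∧ θs k < t} := by
        ext k
        simp only [Set.mem_setOf_eq, Set.mem_insert_iff]
        constructor
        · rintro ⟨h1, h2⟩
          rcases eq_or_lt_of_le (hminval k h1 (lt_of_lt_of_le h2 ht.2)) with h3 | h3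
          · left; exact (hmono.injective h3.symm)
          · right; exact ⟨h3, h2⟩
        · rintro (rfl | ⟨h3, h4⟩)
          · exact ⟨hk0S.1, ht.1⟩
          · exact ⟨lt_trans hk0S.1 h3, h4⟩
      have hnotmem : k0 ∉ {k : ℤ | θ' < θs k ∧ θs k < t} := by
        simp only [Set.mem_setOf_eq, not_and]
        intro hcon
        exact absurd hcon (lt_irrefl _)
      have hfint : {k : ℤ | θ' < θs k ∧ θs k < t}.Finite :=
        (finite_imp hθ0 hmono hgap θ' t)
      have hsum : ∑ᶠ k ∈ {k : ℤ | σ < θs k ∧ θs k < t}, b * φ (θs k)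
          = b * φ θ' + ∑ᶠ k ∈ {k : ℤ | θ' < θs k ∧ θs k < t}, b * φ (θs k) := by
        rw [hsetsplit, finsum_mem_insert _ hnotmem hfint]
      have hθ'le : b * φ θ' ≤ 0 :=
        mul_nonpos_of_nonneg_of_nonpos hb (hφ1 θ' ⟨hk0S.1, le_rfl⟩)
      rw [hI, hsum] at h1
      linarith
    -- count decreases
    have hcount : {k : ℤ | θ' < θs k ∧ θs k < T}.ncard = n := by
      have hset : {k : ℤ | θ' < θs k ∧ θs k < T} = {k : ℤ | σ < θs k ∧ θs k < T} \ {k0} := by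
        ext k
        simp only [Set.mem_setOf_eq, Set.mem_diff, Set.mem_singleton_iff]
        constructor
        · rintro ⟨h1, h2⟩
          refine ⟨⟨lt_trans hk0S.1 h1, h2⟩, ?_⟩
          rintro rfl
          exact absurd h1 (lt_irrefl _)
        · rintro ⟨⟨h1, h2⟩, h3⟩
          refine ⟨lt_of_le_of_ne (hminval k h1 h2) ?_, h2⟩
          intro hcon
          exact h3 (hmono.injective hcon.symm)
      rw [hset, Set.ncard_diff_singleton_of_mem (hfin.mem_toFinset.1 hk0mem), hn]
      omega
    have hres := ih θ' hcount hint2 hle2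
    -- combine
    intro t ht
    rcases le_or_gt t θ' with hc | hc
    · exact hφ1 t ⟨ht.1, hc⟩
    · exact hres t ⟨hc, ht.2⟩
end comp
/-- FTC computation -/
theorem exp_integral (a c : ℝ) {σ t : ℝ} (h : σ ≤ t) :
    ∫ s in Ioc σ t, a * Real.exp (a * (s - c))
      = Real.exp (a * (t - c)) - Real.exp (a * (σ - c)) := by
  rw [← intervalIntegral.integral_of_le h]
  have hd : ∀ x ∈ Set.uIcc σ t, HasDerivAt (fun y => Real.exp (a * (y - c)))
      (a * Real.exp (a * (x - c))) x := by
    intro x _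
    have h1 : HasDerivAt (fun y : ℝ => a * (y - c)) a x := by
      simpa using (((hasDerivAt_id x).sub_const c).const_mul a)
    have := h1.exp
    simpa [mul_comm] using this
  rw [intervalIntegral.integral_eq_sub_of_hasDerivAt hd]
  apply Continuous.intervalIntegrable
  continuity

section kid
variable (hθ0 : 0 < θ0) (hmono : StrictMono θs) (hgap : ∀ k : ℤ, θ0 ≤ θs (k + 1) - θs k)
include hθ0 hmono hgap

/-- forward kernel identity -/
theorem kernel_id (ha : 0 ≤ a) (hb : 0 ≤ b) : ∀ (n : ℕ) (σ t : ℝ), σ ≤ t → cnt θs σ t = n →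
    K a b θs σ t = 1 + (∫ s in Ioc σ t, a * K a b θs σ s) +
      ∑ᶠ k ∈ {k : ℤ | σ < θs k ∧ θs k < t}, b * K a b θs σ (θs k) := by
  intro n
  induction n with
  | zero =>
    intro σ t hσt hcnt
    have hfin := finite_imp hθ0 hmono hgap σ t
    have hempty : {k : ℤ | σ < θs k ∧ θs k < t} = ∅ := by
      rwa [← Set.ncard_eq_zero hfin]
    have hcnt' : ∀ s ∈ Ioc σ t, cnt θs σ s = 0 := by
      intro s hs
      have := cnt_mono hθ0 hmono hgap σ hs.2
      rw [hcnt] at this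
      omega
    have hKt : K a b θs σ t = Real.exp (a * (t - σ)) := by
      simp only [K, hcnt, pow_zero, one_mul]
    have hI : ∫ s in Ioc σ t, a * K a b θs σ s = ∫ s in Ioc σ t, a * Real.exp (a * (s - σ)) := by
      apply setIntegral_congr_fun measurableSet_Ioc
      intro s hs
      simp only [K, hcnt' s hs, pow_zero, one_mul]
    rw [hKt, hI, exp_integral a σ hσt, hempty, finsum_mem_empty]
    simp
  | succ n ih =>
    intro σ t hσt hcnt
    have hfin := finite_imp hθ0 hmono hgap σ t
    have hne : hfin.toFinset.Nonempty := by
      rw [← Finset.card_pos, ← Set.ncard_eq_toFinset_card _ hfin]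
      rw [show {k : ℤ | σ < θs k ∧ θs k < t}.ncard = n + 1 from hcnt]; omega
    set k1 := hfin.toFinset.max' hne with hk1
    have hk1mem : k1 ∈ hfin.toFinset := Finset.max'_mem _ _
    have hk1S : σ < θs k1 ∧ θs k1 < t := hfin.mem_toFinset.1 hk1mem
    set θ' := θs k1 with hθ'
    have hmaxval : ∀ k : ℤ, σ < θs k → θs k < t → θs k ≤ θ' := by
      intro k h1 h2
      exact hmono.monotone (Finset.le_max' _ _ (hfin.mem_toFinset.2 ⟨h1, h2⟩))
    have hsmall : {k : ℤ | σ < θs k ∧ θs k < θ'} = {k : ℤ | σ < θs k ∧ θs k < t} \ {k1} := by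
      ext k
      simp only [Set.mem_setOf_eq, Set.mem_diff, Set.mem_singleton_iff]
      constructor
      · rintro ⟨h1, h2⟩
        exact ⟨⟨h1, lt_trans h2 hk1S.2⟩, fun hcon => absurd h2 (by rw [hcon]; exact lt_irrefl _)⟩
      · rintro ⟨⟨h1, h2⟩, h3⟩
        exact ⟨h1, lt_of_le_of_ne (hmaxval k h1 h2) (fun hcon => h3 (hmono.injective hcon))⟩
    have hcntθ' : cnt θs σ θ' = n := by
      rw [cnt, hsmall, Set.ncard_diff_singleton_of_mem (hfin.mem_toFinset.1 hk1mem)]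
      rw [show {k : ℤ | σ < θs k ∧ θs k < t}.ncard = n + 1 from hcnt]
      omega
    have hIH := ih σ θ' hk1S.1.le hcntθ'
    -- cnt σ s = n+1 for s ∈ Ioc θ' t
    have hcnts : ∀ s ∈ Ioc θ' t, cnt θs σ s = n + 1 := by
      intro s hs
      have : {k : ℤ | σ < θs k ∧ θs k < s} = {k : ℤ | σ < θs k ∧ θs k < t} := by
        ext k
        simp only [Set.mem_setOf_eq]
        constructor
        · rintro ⟨h1, h2⟩; exact ⟨h1, lt_of_lt_of_le h2 hs.2⟩
        · rintro ⟨h1, h2⟩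
          exact ⟨h1, lt_of_le_of_lt (hmaxval k h1 h2) hs.1⟩
      rw [cnt, this]; exact hcnt
    -- split integral
    have hint1 : IntegrableOn (fun s => a * K a b θs σ s) (Ioc σ θ') :=
      (K_intOn_right hθ0 hmono hgap ha hb σ θ' σ).const_mul a
    have hint2 : IntegrableOn (fun s => a * K a b θs σ s) (Ioc θ' t) :=
      (K_intOn_right hθ0 hmono hgap ha hb σ t θ').const_mul a
    have hdisj : Disjoint (Ioc σ θ') (Ioc θ' t) := by
      apply Set.disjoint_left.2
      rintro x ⟨_, hx2⟩ ⟨hx3, _⟩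
      exact absurd hx3 (not_lt.mpr hx2)
    have hI : ∫ s in Ioc σ t, a * K a b θs σ s
        = (∫ s in Ioc σ θ', a * K a b θs σ s) + ∫ s in Ioc θ' t, a * K a b θs σ s := by
      rw [← Ioc_union_Ioc_eq_Ioc hk1S.1.le hk1S.2.le]
      exact setIntegral_union hdisj measurableSet_Ioc hint1 hint2
    have hI2 : ∫ s in Ioc θ' t, a * K a b θs σ s
        = (1+b)^(n+1) * (Real.exp (a * (t - σ)) - Real.exp (a * (θ' - σ))) := by
      have : ∫ s in Ioc θ' t, a * K a b θs σ s
          = ∫ s in Ioc θ' t, (1+b)^(n+1) * (a * Real.exp (a * (s - σ))) := by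
        apply setIntegral_congr_fun measurableSet_Ioc
        intro s hs
        simp only [K, hcnts s hs]; ring
      rw [this, integral_const_mul, exp_integral a σ hk1S.2.le]
    -- split sum
    have hsetsplit : {k : ℤ | σ < θs k ∧ θs k < t} = insert k1 {k : ℤ | σ < θs k ∧ θs k < θ'} := by
      rw [hsmall]
      rw [Set.insert_diff_singleton, Set.insert_eq_of_mem (hfin.mem_toFinset.1 hk1mem)]
    have hnotmem : k1 ∉ {k : ℤ | σ < θs k ∧ θs k < θ'} := by
      simp only [Set.mem_setOf_eq, not_and]
      exact fun _ => lt_irrefl _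
    have hfins : {k : ℤ | σ < θs k ∧ θs k < θ'}.Finite := finite_imp hθ0 hmono hgap σ θ'
    have hsum : ∑ᶠ k ∈ {k : ℤ | σ < θs k ∧ θs k < t}, b * K a b θs σ (θs k)
        = b * K a b θs σ θ' + ∑ᶠ k ∈ {k : ℤ | σ < θs k ∧ θs k < θ'}, b * K a b θs σ (θs k) := by
      rw [hsetsplit, finsum_mem_insert _ hnotmem hfins]
    -- assemble
    have hKθ' : K a b θs σ θ' = (1+b)^n * Real.exp (a * (θ' - σ)) := by simp only [K, hcntθ']
    have hKt : K a b θs σ t = (1+b)^(n+1) * Real.exp (a * (t - σ)) := by simp only [K, hcnt]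
    have hfromIH : ∑ᶠ k ∈ {k : ℤ | σ < θs k ∧ θs k < θ'}, b * K a b θs σ (θs k)
        = K a b θs σ θ' - 1 - ∫ s in Ioc σ θ', a * K a b θs σ s := by
      rw [hIH]; ring
    rw [hI, hI2, hsum, hfromIH, hKθ', hKt]
    ring
end kid
section E1sec
variable (hθ0 : 0 < θ0) (hmono : StrictMono θs) (hgap : ∀ k : ℤ, θ0 ≤ θs (k + 1) - θs k)
  (ha : 0 ≤ a) (hb : 0 ≤ b)
include hθ0 hmono hgap ha hb

theorem K_box (hθ0 : 0 < θ0) {σ t' s s' : ℝ} (h1 : σ ≤ s) (h2 : s' ≤ t') :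
    K a b θs s s' ≤ K a b θs σ t' := by
  apply mul_le_mul
  · apply pow_le_pow_right₀ (by linarith)
    apply Set.ncard_le_ncard _ (finite_imp hθ0 hmono hgap σ t')
    rintro k ⟨hk1, hk2⟩
    exact ⟨lt_of_le_of_lt h1 hk1, lt_of_lt_of_le hk2 h2⟩
  · exact Real.exp_le_exp.2 (by nlinarith)
  · positivity
  · exact pow_nonneg (by linarith) _

omit hθ0 hmono hgap ha hb in
theorem cntF_meas (F : Finset ℤ) : Measurable (fun p : ℝ × ℝ => cntF F θs p.2 p.1) := by
  have heq : (fun p : ℝ × ℝ => cntF F θs p.2 p.1)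
      = fun p => ∑ k ∈ F, if p.2 < θs k ∧ θs k < p.1 then 1 else 0 := by
    funext p
    exact Finset.card_filter _ _
  rw [heq]
  apply Finset.measurable_sum
  intro k _
  apply Measurable.ite _ measurable_const measurable_const
  exact (measurableSet_lt measurable_snd measurable_const).inter
    (measurableSet_lt measurable_const measurable_fst)

omit hθ0 hmono hgap ha hb in
theorem cnt_eq_cntF {α β : ℝ} (hfin : {k : ℤ | α < θs k ∧ θs k < β}.Finite)
    {r s : ℝ} (hr : α < r) (hs : s ≤ β) :
    cnt θs r s = cntF hfin.toFinset θs r s := by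
  rw [cnt, cntF]
  have : {j : ℤ | r < θs j ∧ θs j < s} = ↑(hfin.toFinset.filter (fun k => r < θs k ∧ θs k < s)) := by
    ext j
    simp only [Set.mem_setOf_eq, Finset.coe_filter, Set.Finite.mem_toFinset, Set.mem_setOf_eq]
    constructor
    · rintro ⟨h1, h2⟩
      exact ⟨⟨lt_trans hr h1, lt_of_lt_of_le h2 hs⟩, h1, h2⟩
    · rintro ⟨_, h1, h2⟩
      exact ⟨h1, h2⟩
  rw [this, Set.ncard_coe_finset]

variable {τ t : ℝ} (hτt : τ < t) (h : ℝ → ℝ) (hhc : Continuous h)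
include hτt hhc

theorem W_int : Integrable (W a b θs h)
    ((volume.restrict (Ioc τ t)).prod (volume.restrict (Ioc τ t))) := by
  obtain ⟨HM, hHM⟩ := isCompact_Icc.exists_bound_of_continuousOn (hhc.continuousOn (s := Icc τ t))
  set hfin := finite_imp hθ0 hmono hgap τ t with hfindef
  set F := hfin.toFinset with hF
  set W' : ℝ × ℝ → ℝ := fun p =>
    if p.2 ≤ p.1 then a * ((1+b) ^ (cntF F θs p.2 p.1) * Real.exp (a * (p.1 - p.2))) * h p.2 else 0
    with hW'
  have hW'meas : Measurable W' := by
    apply Measurable.ite (measurableSet_le measurable_snd measurable_fst) _ measurable_const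
    apply Measurable.mul
    apply Measurable.mul measurable_const
    apply Measurable.mul
    · exact (measurable_from_nat (f := fun n => ((1:ℝ)+b)^n)).comp (cntF_meas F)
    · apply Real.measurable_exp.comp
      exact measurable_const.mul (measurable_fst.sub measurable_snd)
    · exact hhc.measurable.comp measurable_snd
  have hprodset : MeasurableSet ((Ioc τ t) ×ˢ (Ioc τ t)) :=
    measurableSet_Ioc.prod measurableSet_Ioc
  have haeeq : W a b θs h =ᵐ[(volume.restrict (Ioc τ t)).prod (volume.restrict (Ioc τ t))] W' := by
    rw [Measure.prod_restrict]
    apply (ae_restrict_iff' hprodset).2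
    apply ae_of_all
    rintro ⟨s, r⟩ hp
    simp only [Set.mem_prod] at hp
    by_cases hc : r ≤ s
    · simp only [W, W', hc, if_true]
      rw [← cnt_eq_cntF hfin hp.2.1 hp.1.2]
      rfl
    · simp only [W, W', hc, if_false]
  have hbound : ∀ p ∈ (Ioc τ t) ×ˢ (Ioc τ t), ‖W a b θs h p‖ ≤ a * K a b θs τ t * |HM| := by
    rintro ⟨s, r⟩ hp
    simp only [Set.mem_prod] at hp
    by_cases hc : r ≤ s
    · simp only [W, hc, if_true]
      rw [Real.norm_eq_abs, abs_mul, abs_mul]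
      have h1 : |a| = a := abs_of_nonneg ha
      have h2 : |K a b θs r s| = K a b θs r s := abs_of_nonneg (K_nonneg hb _ _)
      rw [h1, h2]
      have h3 : K a b θs r s ≤ K a b θs τ t :=
        K_box hθ0 hmono hgap ha hb hθ0 hp.2.1.le hp.1.2
      have h4 : |h r| ≤ |HM| := le_trans (by simpa using hHM r ⟨hp.2.1.le, hp.2.2⟩) (le_abs_self _)
      have hK0 : 0 ≤ K a b θs r s := K_nonneg hb _ _
      have hKτ : 0 ≤ K a b θs τ t := K_nonneg hb _ _
      have habs : 0 ≤ |h r| := abs_nonneg _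
      have h5 : a * K a b θs r s ≤ a * K a b θs τ t := mul_le_mul_of_nonneg_left h3 ha
      have h6 : a * K a b θs r s * |h r| ≤ a * K a b θs τ t * |h r| :=
        mul_le_mul_of_nonneg_right h5 habs
      have h7 : a * K a b θs τ t * |h r| ≤ a * K a b θs τ t * |HM| :=
        mul_le_mul_of_nonneg_left h4 (mul_nonneg ha hKτ)
      linarith
    · simp only [W, hc, if_false]
      simp only [norm_zero]
      have : 0 ≤ K a b θs τ t := K_nonneg hb _ _
      positivity
  haveI : IsFiniteMeasure (volume.restrict (Ioc τ t)) :=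
    ⟨by rw [Measure.restrict_apply_univ]; exact measure_Ioc_lt_top⟩
  apply Integrable.mono' (integrable_const (a * K a b θs τ t * |HM|))
  · exact hW'meas.aestronglyMeasurable.congr haeeq.symm
  · rw [Measure.prod_restrict]
    apply (ae_restrict_iff' hprodset).2
    exact ae_of_all _ hbound

theorem Wslice_s {s : ℝ} (hs : s ∈ Ioc τ t) :
    (∫ r in Ioc τ t, W a b θs h (s, r)) = ∫ r in Ioc τ s, a * K a b θs r s * h r := by
  have heq : (fun r => W a b θs h (s, r)) = (Iic s).indicator (fun r => a * K a b θs r s * h r) := by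
    funext r
    by_cases hc : r ≤ s
    · rw [Set.indicator_of_mem (Set.mem_Iic.2 hc)]; simp [W, hc]
    · rw [Set.indicator_of_notMem (fun hmem => hc (Set.mem_Iic.1 hmem))]; simp [W, hc]
  rw [heq, integral_indicator measurableSet_Iic, Measure.restrict_restrict measurableSet_Iic]
  have hset : Iic s ∩ Ioc τ t = Ioc τ s := by
    ext x
    simp only [Set.mem_inter_iff, Set.mem_Iic, Set.mem_Ioc]
    constructor
    · rintro ⟨h1, h2, h3⟩; exact ⟨h2, h1⟩
    · rintro ⟨h1, h2⟩; exact ⟨h2, h1, le_trans h2 hs.2⟩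
  rw [hset]

theorem Wslice_r {r : ℝ} (hr : r ∈ Ioc τ t) :
    (∫ s in Ioc τ t, W a b θs h (s, r)) = h r * ∫ s in Ioc r t, a * K a b θs r s := by
  have heq : (fun s => W a b θs h (s, r)) = (Ici r).indicator (fun s => a * K a b θs r s * h r) := by
    funext s
    by_cases hc : r ≤ s
    · rw [Set.indicator_of_mem (Set.mem_Ici.2 hc)]; simp [W, hc]
    · rw [Set.indicator_of_notMem (fun hmem => hc (Set.mem_Ici.1 hmem))]; simp [W, hc]
  rw [heq, integral_indicator measurableSet_Ici, Measure.restrict_restrict measurableSet_Ici]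
  have hset : Ici r ∩ Ioc τ t = Icc r t := by
    ext x
    simp only [Set.mem_inter_iff, Set.mem_Ici, Set.mem_Ioc, Set.mem_Icc]
    constructor
    · rintro ⟨h1, _, h3⟩; exact ⟨h1, h3⟩
    · rintro ⟨h1, h2⟩; exact ⟨h1, lt_of_lt_of_le hr.1 h1, h2⟩
  rw [hset, integral_Icc_eq_integral_Ioc, ← integral_const_mul]
  apply setIntegral_congr_fun measurableSet_Ioc
  intro x _
  ring
theorem piece_int {c : ℝ} (hc : c ≤ t) :
    IntegrableOn (fun r => b * (a * K a b θs r c * h r)) (Ioc τ t) := by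
  obtain ⟨HM, hHM⟩ := isCompact_Icc.exists_bound_of_continuousOn (hhc.continuousOn (s := Icc τ t))
  apply bdd_integrableOn measurableSet_Ioc (Metric.isBounded_Ioc _ _)
    (M := b * (a * K a b θs τ t * |HM|))
  · exact measurable_const.mul (((K_meas_left hθ0 hmono hgap c).const_mul a).mul hhc.measurable)
  · intro r hr
    have hKb : K a b θs r c ≤ K a b θs τ t := K_box hθ0 hmono hgap ha hb hθ0 hr.1.le hc
    have hK0 : 0 ≤ K a b θs r c := K_nonneg hb _ _
    have hKτ : 0 ≤ K a b θs τ t := K_nonneg hb _ _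
    have hh : |h r| ≤ |HM| :=
      le_trans (by simpa using hHM r ⟨hr.1.le, hr.2⟩) (le_abs_self _)
    rw [abs_mul, abs_mul, abs_mul, abs_of_nonneg hb, abs_of_nonneg ha, abs_of_nonneg hK0]
    have h1 : a * K a b θs r c ≤ a * K a b θs τ t := mul_le_mul_of_nonneg_left hKb ha
    have h2 : a * K a b θs r c * |h r| ≤ a * K a b θs τ t * |HM| := by
      apply mul_le_mul h1 hh (abs_nonneg _) (mul_nonneg ha hKτ)
    exact mul_le_mul_of_nonneg_left h2 hb

theorem base_right_int {c : ℝ} (hc : τ < c) :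
    IntegrableOn (fun s => b * K a b θs c s * h c) (Ioc τ t) := by
  apply IntegrableOn.congr_fun
    ((K_intOn_right hθ0 hmono hgap ha hb c t τ).const_mul (b * h c)) _ measurableSet_Ioc
  intro x _
  show b * h c * K a b θs c x = b * K a b θs c x * h c
  ring

theorem Bf_intOn : IntegrableOn
    (Bf a b θs h (finite_imp hθ0 hmono hgap τ t).toFinset) (Ioc τ t) := by
  apply integrable_finset_sum
  intro k hk
  have hkS := (finite_imp hθ0 hmono hgap τ t).mem_toFinset.1 hk
  have heq : (fun s => if θs k < s then b * K a b θs (θs k) s * h (θs k) else 0)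
      = (Ioi (θs k)).indicator (fun s => b * K a b θs (θs k) s * h (θs k)) := by
    funext s
    by_cases hcs : θs k < s
    · rw [Set.indicator_of_mem (Set.mem_Ioi.2 hcs)]; simp [hcs]
    · rw [Set.indicator_of_notMem (fun hmem => hcs (Set.mem_Ioi.1 hmem))]; simp [hcs]
  rw [heq]
  exact (base_right_int hθ0 hmono hgap ha hb hτt h hhc hkS.1).indicator measurableSet_Ioi

theorem Rrepr {s : ℝ} (hs : s ∈ Ioc τ t) :
    R a b θs τ h s = (∫ r in Ioc τ s, a * K a b θs r s * h r)
      + Bf a b θs h (finite_imp hθ0 hmono hgap τ t).toFinset s := by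
  rw [R, Bf]
  congr 1
  have hset : {k : ℤ | τ < θs k ∧ θs k < s}
      = ↑((finite_imp hθ0 hmono hgap τ t).toFinset.filter (fun k => θs k < s)) := by
    ext k
    simp only [Set.mem_setOf_eq, Finset.coe_filter, Set.Finite.mem_toFinset, Set.mem_setOf_eq]
    constructor
    · rintro ⟨h1, h2⟩
      exact ⟨⟨h1, lt_of_lt_of_le h2 hs.2⟩, h2⟩
    · rintro ⟨⟨h1, _⟩, h2⟩
      exact ⟨h1, h2⟩
  rw [hset, finsum_mem_coe_finset, Finset.sum_filter]

theorem R_intOn : IntegrableOn (R a b θs τ h) (Ioc τ t) := by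
  have hmargS : IntegrableOn (fun s => ∫ r in Ioc τ t, W a b θs h (s, r)) (Ioc τ t) :=
    (W_int hθ0 hmono hgap ha hb hτt h hhc).integral_prod_left
  apply IntegrableOn.congr_fun
    (hmargS.add (Bf_intOn hθ0 hmono hgap ha hb hτt h hhc)) _ measurableSet_Ioc
  intro s hs
  rw [Pi.add_apply, Wslice_s hθ0 hmono hgap ha hb hτt h hhc hs]
  exact (Rrepr hθ0 hmono hgap ha hb hτt h hhc hs).symm

theorem ind_int (c d : ℝ) :
    IntegrableOn (fun s => if c < s then d * K a b θs c s else 0) (Ioc τ t) := by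
  have hbase : IntegrableOn (fun s => d * K a b θs c s) (Ioc τ t) :=
    (K_intOn_right hθ0 hmono hgap ha hb c t τ).const_mul d
  have heq : (fun s => if c < s then d * K a b θs c s else 0)
      = (Ioi c).indicator (fun s => d * K a b θs c s) := by
    funext s
    by_cases hcs : c < s
    · rw [Set.indicator_of_mem (Set.mem_Ioi.2 hcs)]; simp [hcs]
    · rw [Set.indicator_of_notMem (fun hmem => hcs (Set.mem_Ioi.1 hmem))]; simp [hcs]
  rw [heq]
  exact hbase.indicator measurableSet_Ioi

theorem ind_int2 (c : ℝ) (hc : c ≤ t) :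
    IntegrableOn (fun r => if r ≤ c then b * (a * K a b θs r c * h r) else 0) (Ioc τ t) := by
  have hbase := piece_int hθ0 hmono hgap ha hb hτt h hhc hc
  have heq : (fun r => if r ≤ c then b * (a * K a b θs r c * h r) else 0)
      = (Iic c).indicator (fun r => b * (a * K a b θs r c * h r)) := by
    funext r
    by_cases hcs : r ≤ c
    · rw [Set.indicator_of_mem (Set.mem_Iic.2 hcs)]; simp [hcs]
    · rw [Set.indicator_of_notMem (fun hmem => hcs (Set.mem_Iic.1 hmem))]; simp [hcs]
  rw [heq]
  exact hbase.indicator measurableSet_Iic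

theorem E1 : R a b θs τ h t = (∫ s in Ioc τ t, a * (h s + R a b θs τ h s)) +
      ∑ᶠ k ∈ {k : ℤ | τ < θs k ∧ θs k < t}, b * (h (θs k) + R a b θs τ h (θs k)) := by
  have hfin := finite_imp hθ0 hmono hgap τ t
  set F := hfin.toFinset with hFdef
  have hFmem : ∀ k, k ∈ F ↔ (τ < θs k ∧ θs k < t) := fun k => Set.Finite.mem_toFinset _
  have hsetF : {k : ℤ | τ < θs k ∧ θs k < t} = ↑F := by
    ext k
    simp only [Set.mem_setOf_eq, Finset.mem_coe, hFmem k]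
  have hWint := W_int hθ0 hmono hgap ha hb hτt h hhc
  have hah_int : IntegrableOn (fun s => a * h s) (Ioc τ t) :=
    (continuous_const.mul hhc).integrableOn_Ioc
  have hmargS : IntegrableOn (fun s => ∫ r in Ioc τ t, W a b θs h (s, r)) (Ioc τ t) :=
    hWint.integral_prod_left
  have hmargR : IntegrableOn (fun r => ∫ s in Ioc τ t, W a b θs h (s, r)) (Ioc τ t) :=
    hWint.integral_prod_right
  have hBf : IntegrableOn (Bf a b θs h F) (Ioc τ t) := by
    rw [hFdef]; exact Bf_intOn hθ0 hmono hgap ha hb hτt h hhc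
  have hP_int : IntegrableOn (fun r => a * h r * (∫ s in Ioc r t, a * K a b θs r s)) (Ioc τ t) := by
    apply IntegrableOn.congr_fun (hmargR.const_mul a) _ measurableSet_Ioc
    intro r hr
    show a * (∫ s in Ioc τ t, W a b θs h (s, r)) = _
    beta_reduce
    rw [Wslice_r hθ0 hmono hgap ha hb hτt h hhc hr]
    ring
  have hΨ_int : IntegrableOn (fun r => ∑ k ∈ F,
      if r ≤ θs k then b * (a * K a b θs r (θs k) * h r) else 0) (Ioc τ t) := by
    apply integrable_finset_sum
    intro k hk
    exact ind_int2 hθ0 hmono hgap ha hb hτt h hhc (θs k) ((hFmem k).1 hk).2.le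
  -- eq1 : split the integral of a*(h+R)
  have eq1 : (∫ s in Ioc τ t, a * (h s + R a b θs τ h s))
      = (∫ s in Ioc τ t, a * h s)
        + ((∫ s in Ioc τ t, a * (∫ r in Ioc τ t, W a b θs h (s, r)))
          + (∫ s in Ioc τ t, a * Bf a b θs h F s)) := by
    calc (∫ s in Ioc τ t, a * (h s + R a b θs τ h s))
        = ∫ s in Ioc τ t, (a * h s
            + (a * (∫ r in Ioc τ t, W a b θs h (s, r)) + a * Bf a b θs h F s)) := by
          apply setIntegral_congr_fun measurableSet_Ioc
          intro s hs
          have h1 := Rrepr hθ0 hmono hgap ha hb hτt h hhc hs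
          rw [← hFdef] at h1
          have h2 := Wslice_s hθ0 hmono hgap ha hb hτt h hhc hs
          beta_reduce
          rw [h1, h2]
          ring
      _ = (∫ s in Ioc τ t, a * h s) + ∫ s in Ioc τ t,
            (a * (∫ r in Ioc τ t, W a b θs h (s, r)) + a * Bf a b θs h F s) := by
          have hg_int : IntegrableOn (fun s => a * (∫ r in Ioc τ t, W a b θs h (s, r))
              + a * Bf a b θs h F s) (Ioc τ t) :=
            (hmargS.const_mul a).add (hBf.const_mul a)
          exact integral_add hah_int hg_int
      _ = (∫ s in Ioc τ t, a * h s)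
          + ((∫ s in Ioc τ t, a * (∫ r in Ioc τ t, W a b θs h (s, r)))
            + (∫ s in Ioc τ t, a * Bf a b θs h F s)) := by
          have h3 : (∫ s in Ioc τ t, (a * (∫ r in Ioc τ t, W a b θs h (s, r))
                + a * Bf a b θs h F s))
              = (∫ s in Ioc τ t, a * (∫ r in Ioc τ t, W a b θs h (s, r)))
                + ∫ s in Ioc τ t, a * Bf a b θs h F s :=
            integral_add (hmargS.const_mul a) (hBf.const_mul a)
          rw [h3]
  -- eq2 : Fubini on the double integral
  have eq2 : (∫ s in Ioc τ t, a * (∫ r in Ioc τ t, W a b θs h (s, r)))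
      = ∫ r in Ioc τ t, a * h r * (∫ s in Ioc r t, a * K a b θs r s) := by
    have hswap : (∫ s in Ioc τ t, ∫ r in Ioc τ t, W a b θs h (s, r))
        = ∫ r in Ioc τ t, ∫ s in Ioc τ t, W a b θs h (s, r) :=
      integral_integral_swap (by exact hWint)
    rw [integral_const_mul, hswap, ← integral_const_mul]
    apply setIntegral_congr_fun measurableSet_Ioc
    intro r hr
    beta_reduce
    rw [Wslice_r hθ0 hmono hgap ha hb hτt h hhc hr]
    ring
  -- eq3
  have eq3 : (∫ s in Ioc τ t, a * Bf a b θs h F s)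
      = ∑ k ∈ F, (b * h (θs k) * a) * (∫ s in Ioc (θs k) t, K a b θs (θs k) s) := by
    have hpt : ∀ s, a * Bf a b θs h F s
        = ∑ k ∈ F, (if θs k < s then (b * h (θs k) * a) * K a b θs (θs k) s else 0) := by
      intro s
      rw [Bf, Finset.mul_sum]
      apply Finset.sum_congr rfl
      intro k _
      beta_reduce
      rw [mul_ite, mul_zero]
      split <;> ring
    rw [setIntegral_congr_fun measurableSet_Ioc (fun s _ => hpt s)]
    rw [integral_finset_sum _ (fun k hk => ind_int hθ0 hmono hgap ha hb hτt h hhc (θs k)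
      (b * h (θs k) * a))]
    apply Finset.sum_congr rfl
    intro k hk
    beta_reduce
    have hkS := (hFmem k).1 hk
    have heq : (fun s => if θs k < s then (b * h (θs k) * a) * K a b θs (θs k) s else 0)
        = (Ioi (θs k)).indicator (fun s => (b * h (θs k) * a) * K a b θs (θs k) s) := by
      funext s
      by_cases hcs : θs k < s
      · rw [Set.indicator_of_mem (Set.mem_Ioi.2 hcs)]; simp [hcs]
      · rw [Set.indicator_of_notMem (fun hmem => hcs (Set.mem_Ioi.1 hmem))]; simp [hcs]
    rw [heq, integral_indicator measurableSet_Ioi, Measure.restrict_restrict measurableSet_Ioi]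
    have hset : Ioi (θs k) ∩ Ioc τ t = Ioc (θs k) t := by
      ext x
      simp only [Set.mem_inter_iff, Set.mem_Ioi, Set.mem_Ioc]
      constructor
      · rintro ⟨h1, _, h3⟩; exact ⟨h1, h3⟩
      · rintro ⟨h1, h2⟩; exact ⟨h1, lt_trans hkS.1 h1, h2⟩
    rw [hset, integral_const_mul]
  -- eq4 : split the sum
  have eq4 : (∑ᶠ k ∈ {k : ℤ | τ < θs k ∧ θs k < t}, b * (h (θs k) + R a b θs τ h (θs k)))
      = (∑ k ∈ F, b * h (θs k))
        + ((∑ k ∈ F, b * (∫ r in Ioc τ (θs k), a * K a b θs r (θs k) * h r))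
        + (∑ k ∈ F, b * Bf a b θs h F (θs k))) := by
    rw [hsetF, finsum_mem_coe_finset]
    calc ∑ k ∈ F, b * (h (θs k) + R a b θs τ h (θs k))
        = ∑ k ∈ F, (b * h (θs k)
            + (b * (∫ r in Ioc τ (θs k), a * K a b θs r (θs k) * h r)
              + b * Bf a b θs h F (θs k))) := by
          apply Finset.sum_congr rfl
          intro k hk
          beta_reduce
          have hkS := (hFmem k).1 hk
          have h1 := Rrepr hθ0 hmono hgap ha hb hτt h hhc
            (show θs k ∈ Ioc τ t from ⟨hkS.1, hkS.2.le⟩)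
          rw [← hFdef] at h1
          rw [h1]
          ring
      _ = _ := by rw [Finset.sum_add_distrib, Finset.sum_add_distrib]
  -- eq5
  have eq5 : (∑ k ∈ F, b * (∫ r in Ioc τ (θs k), a * K a b θs r (θs k) * h r))
      = ∫ r in Ioc τ t, ∑ k ∈ F,
          (if r ≤ θs k then b * (a * K a b θs r (θs k) * h r) else 0) := by
    rw [integral_finset_sum _ (fun k hk =>
      ind_int2 hθ0 hmono hgap ha hb hτt h hhc (θs k) ((hFmem k).1 hk).2.le)]
    apply Finset.sum_congr rfl
    intro k hk
    beta_reduce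
    have hkS := (hFmem k).1 hk
    have heq : (fun r => if r ≤ θs k then b * (a * K a b θs r (θs k) * h r) else 0)
        = (Iic (θs k)).indicator (fun r => b * (a * K a b θs r (θs k) * h r)) := by
      funext r
      by_cases hcs : r ≤ θs k
      · rw [Set.indicator_of_mem (Set.mem_Iic.2 hcs)]; simp [hcs]
      · rw [Set.indicator_of_notMem (fun hmem => hcs (Set.mem_Iic.1 hmem))]; simp [hcs]
    rw [heq, integral_indicator measurableSet_Iic, Measure.restrict_restrict measurableSet_Iic]
    have hset : Iic (θs k) ∩ Ioc τ t = Ioc τ (θs k) := by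
      ext x
      simp only [Set.mem_inter_iff, Set.mem_Iic, Set.mem_Ioc]
      constructor
      · rintro ⟨h1, h2, _⟩; exact ⟨h2, h1⟩
      · rintro ⟨h1, h2⟩; exact ⟨h2, h1, le_trans h2 hkS.2.le⟩
    rw [hset, integral_const_mul]
  -- eq6
  have eq6 : (∑ k ∈ F, b * Bf a b θs h F (θs k))
      = ∑ j ∈ F, b * h (θs j) * (∑ k ∈ F,
          if θs j < θs k then b * K a b θs (θs j) (θs k) else 0) := by
    have h1 : ∀ k, b * Bf a b θs h F (θs k)
        = ∑ j ∈ F, (if θs j < θs k then b * (b * K a b θs (θs j) (θs k) * h (θs j)) else 0) := by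
      intro k
      rw [Bf, Finset.mul_sum]
      apply Finset.sum_congr rfl
      intro j _
      beta_reduce
      rw [mul_ite, mul_zero]
    rw [Finset.sum_congr rfl (fun k _ => h1 k), Finset.sum_comm]
    apply Finset.sum_congr rfl
    intro j _
    beta_reduce
    rw [Finset.mul_sum]
    apply Finset.sum_congr rfl
    intro k _
    beta_reduce
    rw [mul_ite, mul_zero]
    split <;> ring
  -- eq7 : integral grouping via kernel identity
  have hEzero : (volume : Measure ℝ) ↑(F.image θs) = 0 :=
    (F.image θs).finite_toSet.measure_zero volume
  have eq7 : (∫ s in Ioc τ t, a * h s)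
      + (∫ r in Ioc τ t, a * h r * (∫ s in Ioc r t, a * K a b θs r s))
      + (∫ r in Ioc τ t, ∑ k ∈ F,
          (if r ≤ θs k then b * (a * K a b θs r (θs k) * h r) else 0))
      = ∫ r in Ioc τ t, a * K a b θs r t * h r := by
    have split1 : ∫ r in Ioc τ t, (a * h r + a * h r * (∫ s in Ioc r t, a * K a b θs r s)
          + ∑ k ∈ F, (if r ≤ θs k then b * (a * K a b θs r (θs k) * h r) else 0))
        = (∫ r in Ioc τ t, (a * h r + a * h r * (∫ s in Ioc r t, a * K a b θs r s)))
          + ∫ r in Ioc τ t, ∑ k ∈ F,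
              (if r ≤ θs k then b * (a * K a b θs r (θs k) * h r) else 0) :=
      integral_add (hah_int.add hP_int) hΨ_int
    have split2 : ∫ r in Ioc τ t, (a * h r + a * h r * (∫ s in Ioc r t, a * K a b θs r s))
        = (∫ r in Ioc τ t, a * h r)
          + ∫ r in Ioc τ t, a * h r * (∫ s in Ioc r t, a * K a b θs r s) :=
      integral_add hah_int hP_int
    rw [← split2, ← split1]
    apply setIntegral_congr_ae measurableSet_Ioc
    filter_upwards [measure_eq_zero_iff_ae_notMem.1 hEzero] with r hrE hrA
    beta_reduce
    have hker := kernel_id hθ0 hmono hgap ha hb (cnt θs r t) r t hrA.2 rfl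
    have hsetr : {k : ℤ | r < θs k ∧ θs k < t} = ↑(F.filter (fun k => r < θs k)) := by
      ext k
      simp only [Set.mem_setOf_eq, Finset.coe_filter, Set.mem_setOf_eq, hFmem k]
      constructor
      · rintro ⟨h1, h2⟩; exact ⟨⟨lt_trans hrA.1 h1, h2⟩, h1⟩
      · rintro ⟨⟨_, h2⟩, h1⟩; exact ⟨h1, h2⟩
    rw [hsetr, finsum_mem_coe_finset, Finset.sum_filter] at hker
    have hΨr : (∑ k ∈ F, if r ≤ θs k then b * (a * K a b θs r (θs k) * h r) else 0)
        = a * h r * (∑ k ∈ F, if r < θs k then b * K a b θs r (θs k) else 0) := by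
      rw [Finset.mul_sum]
      apply Finset.sum_congr rfl
      intro k hk
      beta_reduce
      have hne : r ≠ θs k := by
        intro hcon
        apply hrE
        rw [hcon]
        exact Finset.mem_coe.2 (Finset.mem_image_of_mem θs hk)
      rw [mul_ite, mul_zero]
      have hiff : (r ≤ θs k) ↔ (r < θs k) := ⟨fun hle => lt_of_le_of_ne hle hne, le_of_lt⟩
      rw [if_congr hiff rfl rfl]
      split <;> ring
    rw [hΨr, hker]
    ring
  -- eq8 : sum grouping via kernel identity
  have eq8 : (∑ k ∈ F, b * h (θs k))
      + (∑ k ∈ F, (b * h (θs k) * a) * (∫ s in Ioc (θs k) t, K a b θs (θs k) s))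
      + (∑ j ∈ F, b * h (θs j) * (∑ k ∈ F,
          if θs j < θs k then b * K a b θs (θs j) (θs k) else 0))
      = ∑ k ∈ F, b * K a b θs (θs k) t * h (θs k) := by
    have split1 : ∑ k ∈ F, (b * h (θs k)
          + ((b * h (θs k) * a) * (∫ s in Ioc (θs k) t, K a b θs (θs k) s)
            + b * h (θs k) * (∑ j ∈ F,
              if θs k < θs j then b * K a b θs (θs k) (θs j) else 0)))
        = (∑ k ∈ F, b * h (θs k))
          + (((∑ k ∈ F, (b * h (θs k) * a) * (∫ s in Ioc (θs k) t, K a b θs (θs k) s)))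
            + ∑ k ∈ F, b * h (θs k) * (∑ j ∈ F,
              if θs k < θs j then b * K a b θs (θs k) (θs j) else 0)) := by
      rw [Finset.sum_add_distrib, Finset.sum_add_distrib]
    rw [← add_assoc] at split1
    rw [← split1]
    apply Finset.sum_congr rfl
    intro k hk
    beta_reduce
    have hkS := (hFmem k).1 hk
    have hker := kernel_id hθ0 hmono hgap ha hb (cnt θs (θs k) t) (θs k) t hkS.2.le rfl
    have hsetk : {j : ℤ | θs k < θs j ∧ θs j < t} = ↑(F.filter (fun j => θs k < θs j)) := by
      ext j
      simp only [Set.mem_setOf_eq, Finset.coe_filter, Set.mem_setOf_eq, hFmem j]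
      constructor
      · rintro ⟨h1, h2⟩; exact ⟨⟨lt_trans hkS.1 h1, h2⟩, h1⟩
      · rintro ⟨⟨_, h2⟩, h1⟩; exact ⟨h1, h2⟩
    rw [hsetk, finsum_mem_coe_finset, Finset.sum_filter, integral_const_mul] at hker
    rw [hker]
    ring
  -- eq9 : expand R at t
  have eq9 : R a b θs τ h t = (∫ r in Ioc τ t, a * K a b θs r t * h r)
      + ∑ k ∈ F, b * K a b θs (θs k) t * h (θs k) := by
    rw [R, hsetF, finsum_mem_coe_finset]
  linarith [eq1, eq2, eq3, eq4, eq5, eq6, eq7, eq8, eq9]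

omit hθ0 hmono hgap ha hb hτt hhc in
theorem tsum_eq_finsum_mem {S : Set ℤ} (hS : S.Finite) (f : ℤ → ℝ) :
    (∑' k : S, f k) = ∑ᶠ k ∈ S, f k := by
  rw [tsum_subtype S f, finsum_mem_def]
  exact tsum_eq_finsum (hS.subset Set.support_indicator_subset)

omit hθ0 hmono hgap ha hb hτt hhc in
theorem tsum_eq_finsum_mem' {P : ℤ → Prop} (hS : {k : ℤ | P k}.Finite) (f : ℤ → ℝ) :
    (∑' k : {k : ℤ // P k}, f k) = ∑ᶠ k ∈ {k : ℤ | P k}, f k :=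
  tsum_eq_finsum_mem hS f

end E1sec

theorem final (a b θ0 τ : ℝ) (ha : 0 ≤ a) (hb : 0 ≤ b) (hθ0 : 0 < θ0)
    (θs : ℤ → ℝ) (hmono : StrictMono θs) (hgap : ∀ k : ℤ, θ0 ≤ θs (k + 1) - θs k)
    (u h : ℝ → ℝ) (hu0 : ∀ t, 0 ≤ u t) (hh0 : ∀ t, 0 ≤ h t) (hhc : Continuous h)
    (huint : ∀ t, IntegrableOn u (Set.Ioc τ t))
    (hineq : ∀ t, τ ≤ t → u t ≤ h t + (∫ s in Set.Ioc τ t, a * u s) +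
      ∑' k : {k : ℤ // τ < θs k ∧ θs k < t}, b * u (θs k)) :
    ∀ t, τ ≤ t → u t ≤ h t +
      (∫ s in Set.Ioc τ t,
        a * (1 + b) ^ ({j : ℤ | s < θs j ∧ θs j < t}.ncard) * Real.exp (a * (t - s)) * h s) +
      ∑' k : {k : ℤ // τ < θs k ∧ θs k < t},
        b * (1 + b) ^ ({j : ℤ | θs k < θs j ∧ θs j < t}.ncard) *
          Real.exp (a * (t - θs k)) * h (θs k) := by
  intro t0 ht0
  -- rewrite the tsums in hypothesis and goal
  have hconv : ∀ t : ℝ,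
      (∑' k : {k : ℤ // τ < θs k ∧ θs k < t}, b * u (θs k))
        = ∑ᶠ k ∈ {k : ℤ | τ < θs k ∧ θs k < t}, b * u (θs k) :=
    fun t => tsum_eq_finsum_mem' (finite_imp hθ0 hmono hgap τ t) (fun k => b * u (θs k))
  have hgoal2 : (∑' k : {k : ℤ // τ < θs k ∧ θs k < t0},
        b * (1 + b) ^ ({j : ℤ | θs k < θs j ∧ θs j < t0}.ncard) *
          Real.exp (a * (t0 - θs k)) * h (θs k))
      = ∑ᶠ k ∈ {k : ℤ | τ < θs k ∧ θs k < t0}, b * K a b θs (θs k) t0 * h (θs k) := by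
    rw [tsum_eq_finsum_mem' (finite_imp hθ0 hmono hgap τ t0)
      (fun k => b * (1 + b) ^ ({j : ℤ | θs k < θs j ∧ θs j < t0}.ncard) *
        Real.exp (a * (t0 - θs k)) * h (θs k))]
    apply finsum_mem_congr rfl
    intro k _
    simp only [K, cnt]
    ring
  have hgoal1 : (∫ s in Set.Ioc τ t0,
        a * (1 + b) ^ ({j : ℤ | s < θs j ∧ θs j < t0}.ncard) * Real.exp (a * (t0 - s)) * h s)
      = ∫ s in Set.Ioc τ t0, a * K a b θs s t0 * h s := by
    apply setIntegral_congr_fun measurableSet_Ioc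
    intro s _
    simp only [K, cnt]
    ring
  rw [hgoal1, hgoal2]
  -- now the goal is u t0 ≤ h t0 + (R-parts)
  have hRt0 : h t0 + (∫ s in Set.Ioc τ t0, a * K a b θs s t0 * h s)
      + (∑ᶠ k ∈ {k : ℤ | τ < θs k ∧ θs k < t0}, b * K a b θs (θs k) t0 * h (θs k))
      = h t0 + R a b θs τ h t0 := by
    rw [R]; ring
  rw [hRt0]
  rcases eq_or_lt_of_le ht0 with heq | hlt
  · -- t0 = τ : everything is zero
    subst heq
    have h1 := hineq τ le_rfl
    haveI : IsEmpty {k : ℤ // τ < θs k ∧ θs k < τ} :=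
      ⟨fun ⟨_, hk⟩ => absurd (hk.1.trans hk.2) (lt_irrefl τ)⟩
    rw [tsum_empty] at h1
    have hIoc : Set.Ioc τ τ = (∅ : Set ℝ) := Set.Ioc_self τ
    have hR0 : R a b θs τ h τ = 0 := by
      rw [R]
      have hset0 : {k : ℤ | τ < θs k ∧ θs k < τ} = (∅ : Set ℤ) := by
        apply Set.eq_empty_of_subset_empty
        rintro k ⟨h1', h2'⟩
        exact absurd (h1'.trans h2') (lt_irrefl τ)
      rw [hIoc, hset0, finsum_mem_empty]
      simp
    rw [hIoc] at h1
    simp only [Measure.restrict_empty, integral_zero_measure] at h1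
    rw [hR0]
    linarith
  · -- main case τ < t0
    set φ : ℝ → ℝ := fun s => u s - (h s + R a b θs τ h s) with hφ
    have hRint : IntegrableOn (R a b θs τ h) (Ioc τ t0) :=
      R_intOn hθ0 hmono hgap ha hb hlt h hhc
    have hφint : IntegrableOn φ (Ioc τ t0) :=
      (huint t0).sub ((hhc.integrableOn_Ioc).add hRint)
    have hφle : ∀ t ∈ Ioc τ t0, φ t ≤ (∫ s in Ioc τ t, a * φ s) +
        ∑ᶠ k ∈ {k : ℤ | τ < θs k ∧ θs k < t}, b * φ (θs k) := by
      intro t ht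
      have hE1 := E1 hθ0 hmono hgap ha hb ht.1 h hhc
      have hu := hineq t (le_of_lt ht.1)
      rw [hconv t] at hu
      -- integral difference
      have hint_u : IntegrableOn (fun s => a * u s) (Ioc τ t) := (huint t).const_mul a
      have hint_w : IntegrableOn (fun s => a * (h s + R a b θs τ h s)) (Ioc τ t) :=
        ((hhc.integrableOn_Ioc).add (R_intOn hθ0 hmono hgap ha hb ht.1 h hhc)).const_mul a
      have hIdiff : (∫ s in Ioc τ t, a * φ s)
          = (∫ s in Ioc τ t, a * u s) - ∫ s in Ioc τ t, a * (h s + R a b θs τ h s) := by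
        rw [← integral_sub hint_u hint_w]
        apply setIntegral_congr_fun measurableSet_Ioc
        intro s _
        beta_reduce
        rw [hφ]
        ring
      -- sum difference
      have hfin := finite_imp hθ0 hmono hgap τ t
      have hSdiff : (∑ᶠ k ∈ {k : ℤ | τ < θs k ∧ θs k < t}, b * φ (θs k))
          = (∑ᶠ k ∈ {k : ℤ | τ < θs k ∧ θs k < t}, b * u (θs k))
            - ∑ᶠ k ∈ {k : ℤ | τ < θs k ∧ θs k < t}, b * (h (θs k) + R a b θs τ h (θs k)) := by
        have hset : {k : ℤ | τ < θs k ∧ θs k < t} = ↑hfin.toFinset := by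
          ext k; simp
        rw [hset, finsum_mem_coe_finset, finsum_mem_coe_finset, finsum_mem_coe_finset,
          ← Finset.sum_sub_distrib]
        apply Finset.sum_congr rfl
        intro k _
        rw [hφ]
        ring
      rw [hφ]
      beta_reduce
      rw [hIdiff, hSdiff]
      linarith [hE1]
    have hres := comparison hθ0 hmono hgap ha hb t0 φ
      ({k : ℤ | τ < θs k ∧ θs k < t0}.ncard) τ rfl hφint hφle t0 ⟨hlt, le_rfl⟩
    rw [hφ] at hres
    beta_reduce at hres
    linarith

end
end IG

theorem stmt_12 (a b θ0 τ : ℝ) (ha : 0 ≤ a) (hb : 0 ≤ b) (hθ0 : 0 < θ0)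
    (θs : ℤ → ℝ) (hmono : StrictMono θs) (hgap : ∀ k : ℤ, θ0 ≤ θs (k + 1) - θs k)
    (u h : ℝ → ℝ) (hu0 : ∀ t, 0 ≤ u t) (hh0 : ∀ t, 0 ≤ h t) (hhc : Continuous h)
    (huint : ∀ t, IntegrableOn u (Set.Ioc τ t))
    (hineq : ∀ t, τ ≤ t → u t ≤ h t + (∫ s in Set.Ioc τ t, a * u s) +
      ∑' k : {k : ℤ // τ < θs k ∧ θs k < t}, b * u (θs k)) :
    ∀ t, τ ≤ t → u t ≤ h t +
      (∫ s in Set.Ioc τ t,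
        a * (1 + b) ^ ({j : ℤ | s < θs j ∧ θs j < t}.ncard) * Real.exp (a * (t - s)) * h s) +
      ∑' k : {k : ℤ // τ < θs k ∧ θs k < t},
        b * (1 + b) ^ ({j : ℤ | θs k < θs j ∧ θs j < t}.ncard) *
          Real.exp (a * (t - θs k)) * h (θs k) :=
  IG.final a b θ0 τ ha hb hθ0 θs hmono hgap u h hu0 hh0 hhc huint hineq
end

section
/- Let $a,b\ge0$, $\tau\in\mathbb{R}$, and $\{\theta_k\}$ strictly increasing with gaps $\ge\theta>0$. For all $t>\tau$, the identity $1 + \int_\tau^t a(1+b)^{i((s,t))} e^{a(t-s)}\,ds + \sum_{\tau<\theta_k<t} b(1+b)^{i((\theta_k,t))} e^{a(t-\theta_k)} = (1+b)^{i((\tau,t))} e^{a(t-\tau)}$ holds, where $i((x,y))$ counts terms $\theta_k$ in $(x,y)$. -/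
open MeasureTheory

private lemma gap_ge (θ0 : ℝ) (θs : ℤ → ℝ) (hgap : ∀ k : ℤ, θ0 ≤ θs (k + 1) - θs k)
    (k : ℤ) : ∀ l : ℤ, k ≤ l → ((l : ℝ) - k) * θ0 ≤ θs l - θs k := by
  refine Int.le_induction ?_ ?_
  · simp
  · intro n hn ih
    have h1 := hgap n
    have h2 : (((n + 1 : ℤ) : ℝ) - k) * θ0 = ((n : ℝ) - k) * θ0 + θ0 := by push_cast; ring
    linarith

private lemma finite_between (θ0 : ℝ) (hθ0 : 0 < θ0) (θs : ℤ → ℝ)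
    (hgap : ∀ k : ℤ, θ0 ≤ θs (k + 1) - θs k) (x y : ℝ) :
    {k : ℤ | x < θs k ∧ θs k < y}.Finite := by
  rcases Set.eq_empty_or_nonempty {k : ℤ | x < θs k ∧ θs k < y} with h | ⟨k0, hk0⟩
  · rw [h]; exact Set.finite_empty
  · obtain ⟨N, hN⟩ := exists_nat_gt ((y - x) / θ0)
    apply Set.Finite.subset (Set.finite_Icc (k0 - N) (k0 + N))
    intro k hk
    simp only [Set.mem_Icc]
    have hyx : ∀ j : ℤ, j ∈ {k : ℤ | x < θs k ∧ θs k < y} → ∀ i : ℤ,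
        i ∈ {k : ℤ | x < θs k ∧ θs k < y} → i ≤ j → ((j : ℝ) - i) * θ0 ≤ y - x := by
      intro j hj i hi hij
      have := gap_ge θ0 θs hgap i j hij
      have := hj.2; have := hi.1
      linarith
    have hNθ : y - x < (N : ℝ) * θ0 := by
      rw [div_lt_iff₀ hθ0] at hN; linarith
    constructor
    · by_contra hcon
      push_neg at hcon
      have h1 : ((k0 : ℝ) - k) * θ0 ≤ y - x := hyx k0 hk0 k hk (by omega)
      have h2 : (N : ℝ) < (k0 : ℝ) - k := by
        have : (k : ℝ) < (k0 : ℝ) - N := by exact_mod_cast hcon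
        linarith
      nlinarith
    · by_contra hcon
      push_neg at hcon
      have h1 : ((k : ℝ) - k0) * θ0 ≤ y - x := hyx k hk k0 hk0 (by omega)
      have h2 : (N : ℝ) < (k : ℝ) - k0 := by
        have : (k0 : ℝ) + N < (k : ℝ) := by exact_mod_cast hcon
        linarith
      nlinarith

private lemma tsum_finite {P : ℤ → Prop} (h : {k : ℤ | P k}.Finite) (f : ℤ → ℝ) :
    ∑' k : {k : ℤ // P k}, f k = ∑ k ∈ h.toFinset, f k := by
  have h1 : ∑' x : {x : ℤ // x ∈ h.toFinset}, f x = ∑' k : {k : ℤ // P k}, f k :=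
    (Equiv.subtypeEquivRight (fun k => h.mem_toFinset)).tsum_eq (fun k : {k : ℤ // P k} => f k)
  rw [← h1, Finset.tsum_subtype]

private lemma integ_exp (a t C x y : ℝ) (hxy : x ≤ y) :
    ∫ s in Set.Ioc x y, a * C * Real.exp (a * (t - s)) =
      C * Real.exp (a * (t - x)) - C * Real.exp (a * (t - y)) := by
  rw [← intervalIntegral.integral_of_le hxy]
  have h : ∀ u ∈ Set.uIcc x y, HasDerivAt (fun s => -(C * Real.exp (a * (t - s))))
      (a * C * Real.exp (a * (t - u))) u := by
    intro u _
    have h1 : HasDerivAt (fun s : ℝ => a * (t - s)) (a * (-1)) u :=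
      ((hasDerivAt_id u).const_sub t).const_mul a
    have h2 := (h1.exp.const_mul C).neg
    refine h2.congr_deriv ?_
    ring
  rw [intervalIntegral.integral_eq_sub_of_hasDerivAt h
    (by apply Continuous.intervalIntegrable; fun_prop)]
  ring

private lemma integrable_f (a b t : ℝ) (ha : 0 ≤ a) (hb : 0 ≤ b) (θs : ℤ → ℝ)
    (hfin : ∀ x : ℝ, {j : ℤ | x < θs j ∧ θs j < t}.Finite) (x y : ℝ) :
    IntegrableOn
      (fun s => a * (1 + b) ^ ({j : ℤ | s < θs j ∧ θs j < t}.ncard) * Real.exp (a * (t - s)))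
      (Set.Ioc x y) := by
  have hanti : Antitone (fun s : ℝ => (1 + b) ^ ({j : ℤ | s < θs j ∧ θs j < t}.ncard)) := by
    intro s s' hss'
    apply pow_le_pow_right₀ (by linarith)
    apply Set.ncard_le_ncard _ (hfin s)
    intro j hj
    exact ⟨lt_of_le_of_lt hss' hj.1, hj.2⟩
  have hmeas : Measurable
      (fun s : ℝ => a * (1 + b) ^ ({j : ℤ | s < θs j ∧ θs j < t}.ncard) * Real.exp (a * (t - s))) := by
    apply Measurable.mul
    · exact measurable_const.mul hanti.measurable
    · exact Real.measurable_exp.comp ((measurable_const.sub measurable_id).const_mul a)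
  apply Measure.integrableOn_of_bounded
    (M := a * (1 + b) ^ ({j : ℤ | x < θs j ∧ θs j < t}.ncard) * Real.exp (a * (t - x)))
    measure_Ioc_lt_top.ne hmeas.aestronglyMeasurable
  rw [ae_restrict_iff' measurableSet_Ioc]
  apply ae_of_all
  intro s hs
  have h1 : (0:ℝ) ≤ (1 + b) ^ ({j : ℤ | s < θs j ∧ θs j < t}.ncard) :=
    pow_nonneg (by linarith) _
  rw [Real.norm_eq_abs, abs_of_nonneg (by positivity)]
  have h2 : (1 + b) ^ ({j : ℤ | s < θs j ∧ θs j < t}.ncard)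
      ≤ (1 + b) ^ ({j : ℤ | x < θs j ∧ θs j < t}.ncard) := hanti hs.1.le
  have h3 : Real.exp (a * (t - s)) ≤ Real.exp (a * (t - x)) := by
    apply Real.exp_le_exp.mpr
    have := hs.1.le
    nlinarith
  have h4 : (0:ℝ) ≤ (1 + b) ^ ({j : ℤ | x < θs j ∧ θs j < t}.ncard) :=
    pow_nonneg (by linarith) _
  exact mul_le_mul (mul_le_mul le_rfl h2 h1 ha) h3 (Real.exp_pos _).le (mul_nonneg ha h4)

private lemma key (a b θ0 : ℝ) (ha : 0 ≤ a) (hb : 0 ≤ b) (hθ0 : 0 < θ0)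
    (θs : ℤ → ℝ) (hmono : StrictMono θs) (hgap : ∀ k : ℤ, θ0 ≤ θs (k + 1) - θs k)
    (t : ℝ) : ∀ n : ℕ, ∀ τ : ℝ, τ < t → {k : ℤ | τ < θs k ∧ θs k < t}.ncard = n →
    1 + (∫ s in Set.Ioc τ t,
        a * (1 + b) ^ ({j : ℤ | s < θs j ∧ θs j < t}.ncard) * Real.exp (a * (t - s))) +
      (∑' k : {k : ℤ // τ < θs k ∧ θs k < t},
        b * (1 + b) ^ ({j : ℤ | θs k < θs j ∧ θs j < t}.ncard) * Real.exp (a * (t - θs k)))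
      = (1 + b) ^ ({j : ℤ | τ < θs j ∧ θs j < t}.ncard) * Real.exp (a * (t - τ)) := by
  have hfin : ∀ x : ℝ, {j : ℤ | x < θs j ∧ θs j < t}.Finite :=
    fun x => finite_between θ0 hθ0 θs hgap x t
  intro n
  induction n with
  | zero =>
    intro τ htτ hn
    have hset : {k : ℤ | τ < θs k ∧ θs k < t} = ∅ := (Set.ncard_eq_zero (hfin τ)).mp hn
    have hempty : IsEmpty {k : ℤ // τ < θs k ∧ θs k < t} :=
      ⟨fun ⟨k, hk⟩ => (Set.eq_empty_iff_forall_notMem.mp hset k) hk⟩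
    rw [@tsum_empty _ _ _ _ _ _ hempty]
    have hcongr : ∫ s in Set.Ioc τ t,
        a * (1 + b) ^ ({j : ℤ | s < θs j ∧ θs j < t}.ncard) * Real.exp (a * (t - s))
        = ∫ s in Set.Ioc τ t, a * 1 * Real.exp (a * (t - s)) := by
      apply setIntegral_congr_fun measurableSet_Ioc
      intro s hs
      have h1 : {j : ℤ | s < θs j ∧ θs j < t} = ∅ := by
        rw [Set.eq_empty_iff_forall_notMem]
        intro j hj
        exact (Set.eq_empty_iff_forall_notMem.mp hset j) ⟨lt_trans hs.1 hj.1, hj.2⟩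
      simp only [h1, Set.ncard_empty, pow_zero]
    rw [hcongr, integ_exp a t 1 τ t htτ.le, hn, sub_self, mul_zero, Real.exp_zero]
    ring
  | succ n ih =>
    intro τ htτ hn
    have hS : ({k : ℤ | τ < θs k ∧ θs k < t}).Finite := hfin τ
    have hne : hS.toFinset.Nonempty := by
      rw [Set.Finite.toFinset_nonempty]
      exact Set.nonempty_of_ncard_ne_zero (by rw [hn]; omega)
    set m := hS.toFinset.min' hne with hm
    have hmS : m ∈ {k : ℤ | τ < θs k ∧ θs k < t} :=
      hS.mem_toFinset.mp (hS.toFinset.min'_mem hne)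
    have hmin : ∀ k ∈ {k : ℤ | τ < θs k ∧ θs k < t}, m ≤ k :=
      fun k hk => hS.toFinset.min'_le k (hS.mem_toFinset.mpr hk)
    have hτm : τ < θs m := hmS.1
    have hmt : θs m < t := hmS.2
    have hS' : ({k : ℤ | θs m < θs k ∧ θs k < t}).Finite := hfin (θs m)
    have hSS : {k : ℤ | τ < θs k ∧ θs k < t} = insert m {k : ℤ | θs m < θs k ∧ θs k < t} := by
      ext k
      constructor
      · intro hk
        rcases eq_or_ne k m with h | h
        · exact h ▸ Set.mem_insert _ _
        · have hmk : m < k := lt_of_le_of_ne (hmin k hk) (Ne.symm h)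
          exact Set.mem_insert_of_mem _ ⟨hmono hmk, hk.2⟩
      · intro hk
        rcases hk with h | h
        · exact h ▸ hmS
        · exact ⟨lt_trans hτm h.1, h.2⟩
    have hm' : m ∉ {k : ℤ | θs m < θs k ∧ θs k < t} := by
      simp [Set.mem_setOf_eq]
    have hn' : ({k : ℤ | θs m < θs k ∧ θs k < t}).ncard = n := by
      have := hn
      rw [hSS, Set.ncard_insert_of_notMem hm' hS'] at this
      omega
    have IH := ih (θs m) hmt hn'
    -- split the integral
    have hsplit : (∫ s in Set.Ioc τ t,
        a * (1 + b) ^ ({j : ℤ | s < θs j ∧ θs j < t}.ncard) * Real.exp (a * (t - s)))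
        = (∫ s in Set.Ioc τ (θs m),
            a * (1 + b) ^ ({j : ℤ | s < θs j ∧ θs j < t}.ncard) * Real.exp (a * (t - s)))
          + ∫ s in Set.Ioc (θs m) t,
            a * (1 + b) ^ ({j : ℤ | s < θs j ∧ θs j < t}.ncard) * Real.exp (a * (t - s)) := by
      rw [← Set.Ioc_union_Ioc_eq_Ioc hτm.le hmt.le]
      exact setIntegral_union (Set.Ioc_disjoint_Ioc_of_le le_rfl) measurableSet_Ioc
        (integrable_f a b t ha hb θs hfin τ (θs m)) (integrable_f a b t ha hb θs hfin (θs m) t)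
    -- compute first piece
    have hI1 : (∫ s in Set.Ioc τ (θs m),
        a * (1 + b) ^ ({j : ℤ | s < θs j ∧ θs j < t}.ncard) * Real.exp (a * (t - s)))
        = (1 + b) ^ (n + 1) * Real.exp (a * (t - τ))
          - (1 + b) ^ (n + 1) * Real.exp (a * (t - θs m)) := by
      rw [integral_Ioc_eq_integral_Ioo]
      have heqon : Set.EqOn
          (fun s => a * (1 + b) ^ ({j : ℤ | s < θs j ∧ θs j < t}.ncard) * Real.exp (a * (t - s)))
          (fun s => a * (1 + b) ^ (n + 1) * Real.exp (a * (t - s))) (Set.Ioo τ (θs m)) := by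
        intro s hs
        have hset : {j : ℤ | s < θs j ∧ θs j < t} = {k : ℤ | τ < θs k ∧ θs k < t} := by
          ext j
          constructor
          · intro hj
            exact ⟨lt_trans hs.1 hj.1, hj.2⟩
          · intro hj
            exact ⟨lt_of_lt_of_le hs.2 (hmono.monotone (hmin j hj)), hj.2⟩
        simp only [hset, hn]
      rw [setIntegral_congr_fun measurableSet_Ioo heqon, ← integral_Ioc_eq_integral_Ioo]
      exact integ_exp a t ((1 + b) ^ (n + 1)) τ (θs m) hτm.le
    -- convert the tsums to finite sums
    have hts1 : (∑' k : {k : ℤ // τ < θs k ∧ θs k < t},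
        b * (1 + b) ^ ({j : ℤ | θs k < θs j ∧ θs j < t}.ncard) * Real.exp (a * (t - θs k)))
        = ∑ k ∈ hS.toFinset,
          b * (1 + b) ^ ({j : ℤ | θs k < θs j ∧ θs j < t}.ncard) * Real.exp (a * (t - θs k)) :=
      tsum_finite hS (fun k : ℤ =>
        b * (1 + b) ^ ({j : ℤ | θs k < θs j ∧ θs j < t}.ncard) * Real.exp (a * (t - θs k)))
    have hts2 : (∑' k : {k : ℤ // θs m < θs k ∧ θs k < t},
        b * (1 + b) ^ ({j : ℤ | θs k < θs j ∧ θs j < t}.ncard) * Real.exp (a * (t - θs k)))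
        = ∑ k ∈ hS'.toFinset,
          b * (1 + b) ^ ({j : ℤ | θs k < θs j ∧ θs j < t}.ncard) * Real.exp (a * (t - θs k)) :=
      tsum_finite hS' (fun k : ℤ =>
        b * (1 + b) ^ ({j : ℤ | θs k < θs j ∧ θs j < t}.ncard) * Real.exp (a * (t - θs k)))
    have hFins : hS.toFinset = insert m hS'.toFinset := by
      ext k
      simp [Set.Finite.mem_toFinset, hSS]
    have hsum : ∑ k ∈ hS.toFinset,
        b * (1 + b) ^ ({j : ℤ | θs k < θs j ∧ θs j < t}.ncard) * Real.exp (a * (t - θs k))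
        = b * (1 + b) ^ n * Real.exp (a * (t - θs m))
          + ∑ k ∈ hS'.toFinset,
            b * (1 + b) ^ ({j : ℤ | θs k < θs j ∧ θs j < t}.ncard) * Real.exp (a * (t - θs k)) := by
      rw [hFins, Finset.sum_insert (by rw [Set.Finite.mem_toFinset]; exact hm'), hn']
    rw [hsplit, hI1, hts1, hsum, hn]
    rw [hts2, hn'] at IH
    linear_combination IH

theorem stmt_13 (a b θ0 τ : ℝ) (ha : 0 ≤ a) (hb : 0 ≤ b) (hθ0 : 0 < θ0)
    (θs : ℤ → ℝ) (hmono : StrictMono θs) (hgap : ∀ k : ℤ, θ0 ≤ θs (k + 1) - θs k)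
    (t : ℝ) (ht : τ < t) :
    1 + (∫ s in Set.Ioc τ t,
        a * (1 + b) ^ ({j : ℤ | s < θs j ∧ θs j < t}.ncard) * Real.exp (a * (t - s))) +
      (∑' k : {k : ℤ // τ < θs k ∧ θs k < t},
        b * (1 + b) ^ ({j : ℤ | θs k < θs j ∧ θs j < t}.ncard) * Real.exp (a * (t - θs k)))
      = (1 + b) ^ ({j : ℤ | τ < θs j ∧ θs j < t}.ncard) * Real.exp (a * (t - τ)) :=
  key a b θ0 ha hb hθ0 θs hmono hgap t _ τ ht rfl
end
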